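/- Let x_1, ..., x_N be pairwise distinct points in Euclidean space R^d. Then Σ_{i=1}^N Σ_{j=1}^N Σ_{k ≠ i} (x_i - x_j) · (x_i - x_k) / |x_i - x_k|² = N²(N-1)/2. (This is the key algebraic identity, coming from the logarithmic interaction kernel ∇ln|x| = x/|x|², that makes the evolution equation for the radius R_t of the interacting particle system a closed equation.) -/

import Mathlib

open Finset

/-- For pairwise distinct points `x 1, ..., x N` in Euclidean space `ℝ^d`,
`∑ i, ∑ j, ∑_{k ≠ i} (x i - x j) · (x i - x k) / ‖x i - x k‖² = N²(N-1)/2`.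
This identity, coming from the logarithmic interaction kernel `∇ ln|x| = x/|x|²`, makes the
evolution equation for the radius of the interacting particle system a closed equation. -/
theorem log_kernel_radius_identity (d N : ℕ) (x : Fin N → EuclideanSpace ℝ (Fin d))
    (hx : Function.Injective x) :
    ∑ i, ∑ j, ∑ k ∈ univ.filter (· ≠ i),
        (inner ℝ (x i - x j) (x i - x k) : ℝ) / ‖x i - x k‖ ^ 2
      = (N : ℝ) ^ 2 * ((N : ℝ) - 1) / 2 := by
  rcases Nat.eq_zero_or_pos N with hN | hN
  · subst hN; simp
  have key : ∀ j : Fin N, ∑ i, ∑ k ∈ univ.filter (· ≠ i),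
      (inner ℝ (x i - x j) (x i - x k) : ℝ) / ‖x i - x k‖ ^ 2
      = (N : ℝ) * ((N : ℝ) - 1) / 2 := by
    intro j
    set f : Fin N → Fin N → ℝ :=
      fun i k => (inner ℝ (x i - x j) (x i - x k) : ℝ) / ‖x i - x k‖ ^ 2 with hf
    have hpt : ∀ i k : Fin N, k ≠ i → f i k + f k i = 1 := by
      intro i k hk
      have hc : x i - x k ≠ 0 := sub_ne_zero.mpr fun h => hk (hx h).symm
      have hn : ‖x i - x k‖ ^ 2 ≠ 0 := pow_ne_zero _ (norm_ne_zero_iff.mpr hc)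
      have h1 : (inner ℝ (x k - x j) (x k - x i) : ℝ)
          = - inner ℝ (x k - x j) (x i - x k) := by
        rw [← neg_sub (x i) (x k), inner_neg_right]
      simp only [hf]
      rw [norm_sub_rev (x k) (x i), ← add_div, h1,
        div_eq_one_iff_eq hn]
      have h2 : (inner ℝ (x i - x j) (x i - x k) : ℝ)
          + -inner ℝ (x k - x j) (x i - x k)
          = inner ℝ (x i - x k) (x i - x k) := by
        rw [← sub_eq_add_neg, ← inner_sub_left]
        congr 1
        abel
      rw [h2, real_inner_self_eq_norm_sq]
    have hswap : ∑ i, ∑ k ∈ univ.filter (· ≠ i), f i k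
        = ∑ i, ∑ k ∈ univ.filter (· ≠ i), f k i := by
      rw [Finset.sum_comm' (s := univ) (t := fun i => univ.filter (· ≠ i))
        (t' := univ) (s' := fun k => univ.filter (· ≠ k))]
      intro i k
      simp [ne_comm, eq_comm]
    have hcard : ∀ i : Fin N, (univ.filter (· ≠ i) : Finset (Fin N)).card = N - 1 := by
      intro i
      rw [Finset.filter_ne' univ i, Finset.card_erase_of_mem (mem_univ i), card_univ,
        Fintype.card_fin]
    have h2S : (∑ i, ∑ k ∈ univ.filter (· ≠ i), f i k)
        + (∑ i, ∑ k ∈ univ.filter (· ≠ i), f i k)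
        = (N : ℝ) * ((N : ℝ) - 1) := by
      nth_rewrite 2 [hswap]
      rw [← Finset.sum_add_distrib]
      have : ∀ i ∈ (univ : Finset (Fin N)),
          ((∑ k ∈ univ.filter (· ≠ i), f i k) + ∑ k ∈ univ.filter (· ≠ i), f k i)
          = (N : ℝ) - 1 := by
        intro i _
        rw [← Finset.sum_add_distrib]
        rw [Finset.sum_congr rfl fun k hk => hpt i k (by simpa using hk)]
        rw [Finset.sum_const, hcard i, nsmul_eq_mul, mul_one,
          Nat.cast_sub hN, Nat.cast_one]
      rw [Finset.sum_congr rfl this, Finset.sum_const, card_univ, Fintype.card_fin,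
        nsmul_eq_mul]
    linarith
  rw [Finset.sum_comm]
  rw [Finset.sum_congr rfl fun j _ => key j, Finset.sum_const, card_univ,
    Fintype.card_fin, nsmul_eq_mul]
  ring
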